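/- Let x_α, y_α be rational numbers, τ in the upper half plane, x, z ∈ ℂ, and p, q ∈ ℤ; assume θ(x|τ) ≠ 0 and θ(2πi(z − x_α − y_α τ)|τ) ≠ 0. Then e^{−(y_α+q)x} · F(x, z − (x_α + p) − (y_α + q)τ, τ) = e^{−y_α x} · F(x, z − x_α − y_α τ, τ). (Hence the function h_α(x,z|τ) := e^{−y_α x}F(x, z − x_α − y_α τ, τ) − 2πi/x is independent of the choice of lift (x_α, y_α) ∈ ℚ² of the N-torsion parameter α ∈ (N^{−1}ℤ/ℤ)².) -/

import Mathlib

open Complex Filter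

/-- The Jacobi theta function `θ(z|τ) = ∑_{n∈ℤ} (−1)^n e^{iπτ(n+1/2)²} e^{z(n+1/2)}`. -/
noncomputable def jTheta (z : ℂ) (τ : UpperHalfPlane) : ℂ :=
  ∑' n : ℤ, (-1 : ℂ) ^ n * Complex.exp (Real.pi * I * (τ : ℂ) * ((n : ℂ) + 1/2) ^ 2)
    * Complex.exp (z * ((n : ℂ) + 1/2))

/-- The Jacobi form `F(x,z,τ) = 2πi θ'(0|τ) θ(x+2πiz|τ)/(θ(x|τ) θ(2πiz|τ))`. -/
noncomputable def jacobiF (x z : ℂ) (τ : UpperHalfPlane) : ℂ :=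
  2 * Real.pi * I * deriv (fun w => jTheta w τ) 0 * jTheta (x + 2 * Real.pi * I * z) τ /
    (jTheta x τ * jTheta (2 * Real.pi * I * z) τ)

/-- `θ(u + 2πip|τ) = (−1)^p θ(u|τ)` for integer `p`. -/
lemma jTheta_add_int (u : ℂ) (τ : UpperHalfPlane) (p : ℤ) :
    jTheta (u + 2 * Real.pi * I * p) τ = (-1 : ℂ) ^ p * jTheta u τ := by
  unfold jTheta
  rw [← tsum_mul_left]
  refine tsum_congr fun n => ?_
  have h1 : (u + 2 * Real.pi * I * p) * ((n : ℂ) + 1/2)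
      = u * ((n : ℂ) + 1/2) + ((p * n : ℤ) : ℂ) * (2 * Real.pi * I) + (p : ℂ) * (Real.pi * I) := by
    push_cast; ring
  rw [h1, Complex.exp_add, Complex.exp_add, Complex.exp_int_mul_two_pi_mul_I]
  have h2 : Complex.exp ((p : ℂ) * (Real.pi * I)) = (-1 : ℂ) ^ p := by
    rw [Complex.exp_int_mul, Complex.exp_pi_mul_I]
  rw [h2]
  ring

/-- `θ(u + 2πiτ|τ) = −e^{−πiτ−u} θ(u|τ)`. -/
lemma jTheta_add_tau (u : ℂ) (τ : UpperHalfPlane) :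
    jTheta (u + 2 * Real.pi * I * τ) τ
      = -Complex.exp (-(Real.pi * I * τ) - u) * jTheta u τ := by
  unfold jTheta
  rw [← tsum_mul_left]
  rw [← (Equiv.addRight (1 : ℤ)).tsum_eq fun n : ℤ =>
    -Complex.exp (-(Real.pi * I * τ) - u) *
      ((-1 : ℂ) ^ n * Complex.exp (Real.pi * I * (τ : ℂ) * ((n : ℂ) + 1/2) ^ 2)
        * Complex.exp (u * ((n : ℂ) + 1/2)))]
  refine tsum_congr fun n => ?_
  simp only [Equiv.coe_addRight]
  have h1 : (-1 : ℂ) ^ (n + 1) = (-1 : ℂ) ^ n * (-1) := zpow_add_one₀ (by norm_num) n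
  rw [h1]
  push_cast
  trans ((-1 : ℂ) ^ n * Complex.exp (Real.pi * I * (τ : ℂ) * ((n : ℂ) + 1/2) ^ 2
      + (u + 2 * Real.pi * I * τ) * ((n : ℂ) + 1/2)))
  · rw [mul_assoc, ← Complex.exp_add]
  trans ((-1 : ℂ) ^ n * Complex.exp ((-(Real.pi * I * τ) - u)
      + (Real.pi * I * (τ : ℂ) * (((n : ℂ) + 1) + 1/2) ^ 2 + u * (((n : ℂ) + 1) + 1/2))))
  · congr 2; ring
  · rw [Complex.exp_add, Complex.exp_add]; ring

/-- `θ(u − 2πiτ|τ) = −e^{πiτ+u−2πiτ} θ(u|τ)`. -/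
lemma jTheta_sub_tau (u : ℂ) (τ : UpperHalfPlane) :
    jTheta (u - 2 * Real.pi * I * τ) τ
      = -Complex.exp (Real.pi * I * τ + (u - 2 * Real.pi * I * τ)) * jTheta u τ := by
  have hB := jTheta_add_tau (u - 2 * Real.pi * I * τ) τ
  rw [sub_add_cancel] at hB
  rw [hB]
  rw [show -Complex.exp (Real.pi * I * τ + (u - 2 * Real.pi * I * τ)) *
      (-Complex.exp (-(Real.pi * I * ↑τ) - (u - 2 * Real.pi * I * τ)) *
        jTheta (u - 2 * Real.pi * I * τ) τ)
    = Complex.exp (Real.pi * I * τ + (u - 2 * Real.pi * I * τ))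
      * Complex.exp (-(Real.pi * I * ↑τ) - (u - 2 * Real.pi * I * τ))
      * jTheta (u - 2 * Real.pi * I * τ) τ from by ring]
  rw [← Complex.exp_add]
  rw [show Real.pi * I * ↑τ + (u - 2 * Real.pi * I * τ)
      + (-(Real.pi * I * ↑τ) - (u - 2 * Real.pi * I * τ)) = 0 from by ring]
  rw [Complex.exp_zero, one_mul]

/-- `θ(u + 2πikτ|τ) = (−1)^k e^{−πiτk²−ku} θ(u|τ)` for integer `k`. -/
lemma jTheta_add_int_tau (u : ℂ) (τ : UpperHalfPlane) (k : ℤ) :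
    jTheta (u + 2 * Real.pi * I * k * τ) τ
      = (-1 : ℂ) ^ k *
          Complex.exp (-(Real.pi * I * τ * (k : ℂ) ^ 2) - (k : ℂ) * u) * jTheta u τ := by
  induction k using Int.induction_on with
  | zero => norm_num
  | succ k ih =>
    have harg : u + 2 * Real.pi * I * ((k : ℤ) + 1 : ℤ) * τ
        = (u + 2 * Real.pi * I * (k : ℤ) * τ) + 2 * Real.pi * I * τ := by push_cast; ring
    rw [harg, jTheta_add_tau, ih]
    rw [zpow_add_one₀ (by norm_num : (-1:ℂ) ≠ 0)]
    trans ((-1 : ℂ) ^ (k : ℤ) * (-1) *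
      (Complex.exp (-(Real.pi * I * τ) - (u + 2 * Real.pi * I * (k : ℤ) * τ))
        * Complex.exp (-(Real.pi * I * τ * ((k : ℤ) : ℂ) ^ 2) - ((k : ℤ) : ℂ) * u))
      * jTheta u τ)
    · ring
    rw [← Complex.exp_add]
    congr 2
    push_cast; ring
  | pred k ih =>
    have harg : u + 2 * Real.pi * I * (-(k : ℤ) - 1 : ℤ) * τ
        = (u + 2 * Real.pi * I * (-(k : ℤ) : ℤ) * τ) - 2 * Real.pi * I * τ := by push_cast; ring
    rw [harg, jTheta_sub_tau, ih]
    rw [show (-(k:ℤ) - 1 : ℤ) = (-(k:ℤ) : ℤ) + (-1) from by ring,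
      zpow_add₀ (by norm_num : (-1:ℂ) ≠ 0)]
    trans ((-1 : ℂ) ^ (-(k:ℤ)) * (-1 : ℂ) ^ (-1 : ℤ) *
      (Complex.exp (Real.pi * I * τ + (u + 2 * Real.pi * I * (-(k : ℤ) : ℤ) * τ
          - 2 * Real.pi * I * τ))
        * Complex.exp (-(Real.pi * I * τ * ((-(k : ℤ) : ℤ) : ℂ) ^ 2) - ((-(k : ℤ) : ℤ) : ℂ) * u))
      * jTheta u τ)
    · rw [show ((-1 : ℂ) ^ (-1 : ℤ)) = -1 from by norm_num]; ring
    rw [← Complex.exp_add]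
    congr 2
    push_cast; ring

/-- Elliptic transformation law of the Jacobi form: `F(x, w − p − qτ, τ) = e^{qx} F(x, w, τ)`. -/
lemma jacobiF_shift (x w : ℂ) (τ : UpperHalfPlane) (p q : ℤ)
    (hx : jTheta x τ ≠ 0) (hw : jTheta (2 * Real.pi * I * w) τ ≠ 0) :
    jacobiF x (w - p - q * τ) τ = Complex.exp ((q : ℂ) * x) * jacobiF x w τ := by
  have h1 : 2 * (Real.pi : ℂ) * I * (w - p - q * τ)
      = ((2 * Real.pi * I * w + 2 * Real.pi * I * ((-p : ℤ) : ℂ))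
          + 2 * Real.pi * I * ((-q : ℤ) : ℂ) * τ) := by push_cast; ring
  have h2 : x + (2 * (Real.pi : ℂ) * I * w + 2 * Real.pi * I * ((-p : ℤ) : ℂ)
          + 2 * Real.pi * I * ((-q : ℤ) : ℂ) * τ)
      = (((x + 2 * Real.pi * I * w) + 2 * Real.pi * I * ((-p : ℤ) : ℂ))
          + 2 * Real.pi * I * ((-q : ℤ) : ℂ) * τ) := by push_cast; ring
  unfold jacobiF
  rw [h1, h2, jTheta_add_int_tau, jTheta_add_int_tau, jTheta_add_int, jTheta_add_int]
  set A := deriv (fun w => jTheta w τ) 0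
  set T1 := jTheta (x + 2 * Real.pi * I * w) τ
  set T0 := jTheta (2 * Real.pi * I * w) τ
  have hs : ((-1 : ℂ) ^ (-q : ℤ)) ≠ 0 := zpow_ne_zero _ (by norm_num)
  have hsp : ((-1 : ℂ) ^ (-p : ℤ)) ≠ 0 := zpow_ne_zero _ (by norm_num)
  have he1 := Complex.exp_ne_zero (-(Real.pi * I * τ * ((-q : ℤ) : ℂ) ^ 2)
    - ((-q : ℤ) : ℂ) * (x + 2 * Real.pi * I * w + 2 * Real.pi * I * ((-p : ℤ) : ℂ)))
  have he2 := Complex.exp_ne_zero (-(Real.pi * I * τ * ((-q : ℤ) : ℂ) ^ 2)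
    - ((-q : ℤ) : ℂ) * (2 * Real.pi * I * w + 2 * Real.pi * I * ((-p : ℤ) : ℂ)))
  field_simp [Complex.exp_ne_zero]
  rw [mul_assoc (A * T1), ← Complex.exp_add, mul_right_comm A]
  congr 2
  push_cast; ring

/-- Independence of `h_α` from the choice of lift of the torsion parameter: for rationals
`x_α, y_α`, integers `p, q`, and `τ ∈ ℍ`, assuming `θ(x|τ) ≠ 0` and
`θ(2πi(z − x_α − y_α τ)|τ) ≠ 0`,
`e^{−(y_α+q)x} F(x, z − (x_α+p) − (y_α+q)τ, τ) = e^{−y_α x} F(x, z − x_α − y_α τ, τ)`. -/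
theorem hKZB_lift_independent (xα yα : ℚ) (τ : UpperHalfPlane) (x z : ℂ) (p q : ℤ)
    (hx : jTheta x τ ≠ 0)
    (hz : jTheta (2 * Real.pi * I * (z - (xα : ℂ) - (yα : ℂ) * (τ : ℂ))) τ ≠ 0) :
    Complex.exp (-((yα : ℂ) + (q : ℂ)) * x) *
        jacobiF x (z - ((xα : ℂ) + (p : ℂ)) - ((yα : ℂ) + (q : ℂ)) * (τ : ℂ)) τ
      = Complex.exp (-(yα : ℂ) * x) * jacobiF x (z - (xα : ℂ) - (yα : ℂ) * (τ : ℂ)) τ := by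
  have harg : z - ((xα : ℂ) + (p : ℂ)) - ((yα : ℂ) + (q : ℂ)) * (τ : ℂ)
      = (z - (xα : ℂ) - (yα : ℂ) * (τ : ℂ)) - (p : ℂ) - (q : ℂ) * (τ : ℂ) := by ring
  rw [harg, jacobiF_shift x _ τ p q hx hz, ← mul_assoc, ← Complex.exp_add]
  congr 2
  ring
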